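/- The Dini condition holds for C^{1,β} convex domains (Proposition 7.1): Let n ≥ 2 and let Ω ⊆ ℝⁿ be a nonempty open bounded convex set. Suppose there exist constants H > 0 and β ∈ (0,1] such that at every boundary point y ∈ ∂Ω the outer supporting normal of Ω is unique, denoted ν(y), and the Gauss map is β-Hölder: ‖ν(y) − ν(y′)‖ ≤ H·‖y − y′‖^β for all y, y′ ∈ ∂Ω. Then for every x ∈ ∂Ω, ∫₀¹ M_x(t)/t² dt ≤ H/β. -/

import Mathlib

open Set
open scoped RealInnerProductSpace

noncomputable section

/-- A unit vector `ν` is an outer supporting normal of `Ω` at `y` if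
`⟨ν, z − y⟩ ≤ 0` for all `z ∈ Ω`. -/
def IsOuterNormal {E : Type*} [NormedAddCommGroup E] [InnerProductSpace ℝ E]
    (Ω : Set E) (y ν : E) : Prop :=
  ‖ν‖ = 1 ∧ ∀ z ∈ Ω, ⟪ν, z - y⟫ ≤ 0

/-- `M_x(t) = sup {⟨ν, y − x⟩ : y ∈ ∂Ω, 0 < ‖y − x‖ ≤ t, ν an outer supporting normal at y}`
(`sSup ∅ = 0` in `ℝ`, so the empty case gives `0`). -/
noncomputable def Mfun {E : Type*} [NormedAddCommGroup E] [InnerProductSpace ℝ E]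
    (Ω : Set E) (x : E) (t : ℝ) : ℝ :=
  sSup {m : ℝ | ∃ y ν : E, y ∈ frontier Ω ∧ 0 < ‖y - x‖ ∧ ‖y - x‖ ≤ t ∧
    IsOuterNormal Ω y ν ∧ m = ⟪ν, y - x⟫}

/-- The rescaled spherical slice `V_t = {ω ∈ 𝕊^{n−1} : t·ω ∈ Ω}`. -/
def Vslice {E : Type*} [NormedAddCommGroup E] [InnerProductSpace ℝ E]
    (Ω : Set E) (t : ℝ) : Set E :=
  {ω | ‖ω‖ = 1 ∧ t • ω ∈ Ω}

/-- `S_c = {t ∈ (0,1) : M₀(s) ≤ c·s for all s ∈ [t/4, 4t]}`. -/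
def Sset {E : Type*} [NormedAddCommGroup E] [InnerProductSpace ℝ E]
    (Ω : Set E) (c : ℝ) : Set ℝ :=
  {t | t ∈ Ioo (0:ℝ) 1 ∧ ∀ s ∈ Icc (t/4) (4*t), Mfun Ω 0 s ≤ c * s}

/-- Cap hypothesis: the slice `V₁` contains the geodesic cap of radius `rstar` around
the unit vector `e`. -/
def CapHyp {E : Type*} [NormedAddCommGroup E] [InnerProductSpace ℝ E]
    (Ω : Set E) (e : E) (rstar : ℝ) : Prop :=
  ‖e‖ = 1 ∧ ∀ ω : E, ‖ω‖ = 1 → Real.cos rstar < ⟪ω, e⟫ → ω ∈ Vslice Ω 1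


open MeasureTheory

/-- The Dini condition holds for `C^{1,β}` convex domains (Proposition 7.1). -/
theorem dini_of_C1beta {n : ℕ} (hn : 2 ≤ n)
    (Ω : Set (EuclideanSpace ℝ (Fin n))) (hopen : IsOpen Ω)
    (hbdd : Bornology.IsBounded Ω) (hconv : Convex ℝ Ω) (hne : Ω.Nonempty)
    (H β : ℝ) (hH : 0 < H) (hβ : β ∈ Ioc (0:ℝ) 1)
    (ν : EuclideanSpace ℝ (Fin n) → EuclideanSpace ℝ (Fin n))
    (hν : ∀ y ∈ frontier Ω, IsOuterNormal Ω y (ν y))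
    (huniq : ∀ y ∈ frontier Ω, ∀ ν' : EuclideanSpace ℝ (Fin n),
      IsOuterNormal Ω y ν' → ν' = ν y)
    (hHolder : ∀ y ∈ frontier Ω, ∀ y' ∈ frontier Ω, ‖ν y - ν y'‖ ≤ H * ‖y - y'‖ ^ β) :
    ∀ x ∈ frontier Ω,
      ∫⁻ t in Ioo (0:ℝ) 1, ENNReal.ofReal (Mfun Ω x t / t ^ 2) ≤ ENNReal.ofReal (H / β) := by
  intro x hx
  have hβ0 := hβ.1
  have hβ1 := hβ.2
  -- Step 1: pointwise bound `Mfun Ω x t ≤ H * t ^ (1 + β)` for `t ∈ (0,1)`.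
  have key : ∀ t ∈ Ioo (0:ℝ) 1, Mfun Ω x t ≤ H * t ^ (1 + β) := by
    intro t ht
    have ht0 : (0:ℝ) < t := ht.1
    have hnonneg : (0:ℝ) ≤ H * t ^ (1 + β) := by positivity
    apply Real.sSup_le _ hnonneg
    rintro m ⟨y, ν', hy, hpos, hle, hN, rfl⟩
    have hν'eq : ν' = ν y := huniq y hy ν' hN
    subst hν'eq
    -- the supporting inequality at x extends to the closure
    have hcl : ⟪ν x, y - x⟫ ≤ 0 := by
      have hsub : closure Ω ⊆ {z | ⟪ν x, z - x⟫ ≤ (0:ℝ)} := by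
        apply closure_minimal
        · intro z hz; exact (hν x hx).2 z hz
        · exact isClosed_le (Continuous.inner continuous_const
            (continuous_id.sub continuous_const)) continuous_const
      exact hsub (frontier_subset_closure hy)
    have hsplit : ⟪ν y, y - x⟫ = ⟪ν y - ν x, y - x⟫ + ⟪ν x, y - x⟫ := by
      rw [inner_sub_left]; ring
    have h1 : ⟪ν y - ν x, y - x⟫ ≤ ‖ν y - ν x‖ * ‖y - x‖ := real_inner_le_norm _ _
    have h2 : ‖ν y - ν x‖ ≤ H * ‖y - x‖ ^ β := hHolder y hy x hx
    have h3 : ‖y - x‖ ^ β ≤ t ^ β :=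
      Real.rpow_le_rpow (norm_nonneg _) hle (le_of_lt hβ0)
    have h4 : ‖ν y - ν x‖ * ‖y - x‖ ≤ (H * t ^ β) * t := by
      apply mul_le_mul (h2.trans (by nlinarith [Real.rpow_nonneg (norm_nonneg (y - x)) β]))
        hle (norm_nonneg _)
      positivity
    have h5 : H * t ^ (1 + β) = (H * t ^ β) * t := by
      rw [Real.rpow_add ht0, Real.rpow_one]; ring
    calc ⟪ν y, y - x⟫ = ⟪ν y - ν x, y - x⟫ + ⟪ν x, y - x⟫ := hsplit
      _ ≤ ‖ν y - ν x‖ * ‖y - x‖ + 0 := add_le_add h1 hcl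
      _ ≤ (H * t ^ β) * t := by linarith
      _ = H * t ^ (1 + β) := h5.symm
  -- Step 2: compare with `H * t ^ (β - 1)` pointwise and integrate.
  have step1 : ∫⁻ t in Ioo (0:ℝ) 1, ENNReal.ofReal (Mfun Ω x t / t ^ 2)
      ≤ ∫⁻ t in Ioo (0:ℝ) 1, ENNReal.ofReal (H * t ^ (β - 1)) := by
    apply lintegral_mono_ae
    filter_upwards [ae_restrict_mem measurableSet_Ioo] with t ht
    apply ENNReal.ofReal_le_ofReal
    have ht0 : (0:ℝ) < t := ht.1
    have hsq : (0:ℝ) < t ^ 2 := by positivity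
    have heq : H * t ^ (1 + β) / t ^ 2 = H * t ^ (β - 1) := by
      rw [mul_div_assoc]
      congr 1
      rw [show (t:ℝ) ^ 2 = t ^ ((2:ℕ):ℝ) from (Real.rpow_natCast t 2).symm,
        ← Real.rpow_sub ht0]
      norm_num
      ring_nf
    calc Mfun Ω x t / t ^ 2 ≤ H * t ^ (1 + β) / t ^ 2 :=
          div_le_div_of_nonneg_right (key t ht) hsq.le |>.trans_eq rfl
      _ = H * t ^ (β - 1) := heq
  refine step1.trans (le_of_eq ?_)
  -- Step 3: compute the integral.
  have hβm1 : (-1:ℝ) < β - 1 := by linarith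
  have hint : IntegrableOn (fun t : ℝ => H * t ^ (β - 1)) (Ioo (0:ℝ) 1) := by
    have h1 : IntervalIntegrable (fun t : ℝ => t ^ (β - 1)) volume 0 1 :=
      intervalIntegral.intervalIntegrable_rpow' hβm1
    have h2 : IntegrableOn (fun t : ℝ => t ^ (β - 1)) (Ioc (0:ℝ) 1) :=
      (intervalIntegrable_iff_integrableOn_Ioc_of_le (by norm_num)).mp h1
    exact (h2.mono_set Ioo_subset_Ioc_self).const_mul H
  have hpos : (0:ℝ → ℝ) ≤ᵐ[volume.restrict (Ioo (0:ℝ) 1)]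
      fun t : ℝ => H * t ^ (β - 1) := by
    filter_upwards [ae_restrict_mem measurableSet_Ioo] with t ht
    have := ht.1
    positivity
  rw [← MeasureTheory.ofReal_integral_eq_lintegral_ofReal hint hpos]
  congr 1
  have hIoo : ∫ t in Ioo (0:ℝ) 1, H * t ^ (β - 1)
      = ∫ t in (0:ℝ)..1, H * t ^ (β - 1) := by
    rw [intervalIntegral.integral_of_le (by norm_num : (0:ℝ) ≤ 1),
      ← MeasureTheory.integral_Ioc_eq_integral_Ioo]
  rw [hIoo, intervalIntegral.integral_const_mul,
    integral_rpow (Or.inl hβm1)]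
  have : β - 1 + 1 = β := by ring
  rw [this, Real.one_rpow, Real.zero_rpow (ne_of_gt hβ0)]
  field_simp
  norm_num
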